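/- Let (X,Σ,μ,T) be a measure-preserving system with zero entropy in the sense that for every finite measurable partition P, lim_{n→∞} H(η, P_n)/n = 0, where η(x) = −x log₂ x. Let g:[0,1]→ℝ be concave with g(0) = lim_{x→0⁺} g(x) = 0 such that lim_{x→0⁺} g(x)/η(x) exists and is finite. Then for every finite measurable partition P of X, lim_{n→∞} H(g, P_n)/n = 0. -/

import Mathlib

open MeasureTheory Filter Set

/-- The `g`-entropy `H(g, P_n)` of the join partition
`P_n = P ∨ T⁻¹P ∨ ⋯ ∨ T^{-(n-1)}P` of a finite partition `P` indexed by `Fin k`. -/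
noncomputable def joinEnt {X : Type*} [MeasurableSpace X] (μ : Measure X) (T : X → X)
    (g : ℝ → ℝ) {k : ℕ} (P : Fin k → Set X) (n : ℕ) : ℝ :=
  ∑ f : Fin n → Fin k,
    g ((μ (⋂ i : Fin n, T^[(i : ℕ)] ⁻¹' P (f i))).toReal)

/-- The Shannon function `η(x) = −x·log₂ x`. -/
noncomputable def shannonF : ℝ → ℝ := fun x => -(x * Real.logb 2 x)

lemma shannon_nonneg {x : ℝ} (h0 : 0 ≤ x) (h1 : x ≤ 1) : 0 ≤ shannonF x := by
  have := Real.logb_nonpos (b := 2) one_lt_two h0 h1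
  simp only [shannonF, neg_nonneg]
  exact mul_nonpos_of_nonneg_of_nonpos h0 this

lemma shannon_pos {x : ℝ} (h0 : 0 < x) (h1 : x < 1) : 0 < shannonF x := by
  have := Real.logb_neg (b := 2) one_lt_two h0 h1
  simp only [shannonF, neg_pos]
  exact mul_neg_of_pos_of_neg h0 this

lemma concave_bound {g : ℝ → ℝ} (hconc : ConcaveOn ℝ (Set.Icc 0 1) g) (hg0 : g 0 = 0)
    {δ : ℝ} (hδ : 0 < δ) (hδ1 : δ ≤ 1) :
    ∃ M, 0 ≤ M ∧ ∀ x ∈ Set.Icc δ 1, |g x| ≤ M := by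
  set a := δ/2 with ha
  have ha0 : 0 < a := by positivity
  have ha1 : a ≤ 1 := by linarith
  have haI : a ∈ Set.Icc (0:ℝ) 1 := ⟨ha0.le, ha1⟩
  refine ⟨max ((2/δ) * |g a|) (|g a| + |g (1:ℝ)|), le_max_of_le_right (by positivity), ?_⟩
  rintro x ⟨hx1, hx2⟩
  have hx0 : 0 < x := lt_of_lt_of_le hδ hx1
  have hax : a ≤ x := by linarith
  rw [abs_le]
  constructor
  · -- lower bound via ge_on_segment
    have hseg : x ∈ segment ℝ a (1:ℝ) := by
      rw [segment_eq_Icc (by linarith)]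
      exact ⟨hax, hx2⟩
    have := hconc.ge_on_segment haI ⟨zero_le_one, le_refl 1⟩ hseg
    have h2 : -(|g a| + |g (1:ℝ)|) ≤ min (g a) (g 1) := by
      rcases min_cases (g a) (g 1) with ⟨h, _⟩ | ⟨h, _⟩ <;> rw [h] <;>
        [skip; skip] <;> cases abs_cases (g a) <;> cases abs_cases (g (1:ℝ)) <;> linarith
    have := h2.trans this
    exact le_trans (neg_le_neg (le_max_right _ _)) this
  · -- upper bound
    have hax1 : a/x ≤ 1 := by rw [div_le_one hx0]; exact hax
    have key := hconc.2 ⟨hx0.le, hx2⟩ ⟨le_refl (0:ℝ), zero_le_one⟩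
      (show (0:ℝ) ≤ a/x by positivity)
      (show (0:ℝ) ≤ 1 - a/x by linarith)
      (show a/x + (1 - a/x) = 1 by ring)
    simp only [smul_eq_mul, smul_zero, mul_zero, add_zero, hg0] at key
    rw [div_mul_cancel₀ _ hx0.ne'] at key
    -- key : a/x * g x ≤ g a
    have h2 := mul_le_mul_of_nonneg_left key (by positivity : (0:ℝ) ≤ x/a)
    have h3 : x/a * (a/x * g x) = g x := by field_simp
    rw [h3] at h2
    have hfin : x/a * g a ≤ (2/δ) * |g a| := by
      rcases le_or_gt (g a) 0 with h | h
      · have h4 : x/a * g a ≤ 0 := mul_nonpos_of_nonneg_of_nonpos (by positivity) h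
        have h5 : (0:ℝ) ≤ (2/δ) * |g a| := by positivity
        linarith
      · have habs : |g a| = g a := abs_of_pos h
        rw [habs]
        have hxa : x/a ≤ 2/δ := by
          rw [ha]
          rw [div_le_div_iff₀ (by positivity) hδ]
          nlinarith
        nlinarith
    exact le_max_of_le_left (h2.trans hfin)

/-- If `(X,μ,T)` has zero entropy, i.e. `H(η, Pₙ)/n → 0` for every finite measurable
partition, and `g` is an entropy function such that `lim_{x→0⁺} g(x)/η(x)` exists and is
finite, then `H(g, Pₙ)/n → 0` for every finite measurable partition `P`. -/
theorem statement13 {X : Type*} [MeasurableSpace X] (μ : Measure X)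
    [IsProbabilityMeasure μ] (T : X → X) (hT : MeasurePreserving T μ μ)
    (hzero : ∀ (k : ℕ) (P : Fin k → Set X), (∀ i, MeasurableSet (P i)) →
      (∀ i j, i ≠ j → Disjoint (P i) (P j)) → (⋃ i, P i) = Set.univ →
      Tendsto (fun n => joinEnt μ T shannonF P n / n) atTop (nhds 0))
    (g : ℝ → ℝ) (hconc : ConcaveOn ℝ (Set.Icc 0 1) g) (hg0 : g 0 = 0)
    (hg0' : Tendsto g (nhdsWithin 0 (Set.Ioi 0)) (nhds 0))
    (hlim : ∃ L : ℝ,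
      Tendsto (fun x => g x / shannonF x) (nhdsWithin 0 (Set.Ioi 0)) (nhds L))
    (k : ℕ) (P : Fin k → Set X)
    (hPmeas : ∀ i, MeasurableSet (P i))
    (hPdisj : ∀ i j, i ≠ j → Disjoint (P i) (P j))
    (hPcover : (⋃ i, P i) = Set.univ) :
    Tendsto (fun n => joinEnt μ T g P n / n) atTop (nhds 0) := by
  obtain ⟨L, hL⟩ := hlim
  set C : ℝ := |L| + 1 with hC
  have hC0 : 0 < C := by positivity
  -- extract δ
  have hev : ∀ᶠ x in nhdsWithin 0 (Set.Ioi 0), dist (g x / shannonF x) L < 1 :=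
    hL.eventually (Metric.ball_mem_nhds L one_pos)
  obtain ⟨ε, hε, hball⟩ := Metric.mem_nhdsWithin_iff.mp hev
  set δ : ℝ := min (ε/2) (1/2) with hδdef
  have hδ0 : 0 < δ := lt_min (by positivity) (by norm_num)
  have hδhalf : δ ≤ 1/2 := min_le_right _ _
  have hδ1 : δ ≤ 1 := hδhalf.trans (by norm_num)
  have hsmall : ∀ x : ℝ, 0 < x → x < δ → |g x| ≤ C * shannonF x := by
    intro x hx0 hxδ
    have hx1 : x < 1 := by linarith [hδhalf]
    have hη : 0 < shannonF x := shannon_pos hx0 hx1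
    have hmem : x ∈ Metric.ball (0:ℝ) ε ∩ Set.Ioi 0 := by
      constructor
      · rw [Metric.mem_ball, Real.dist_eq, sub_zero, abs_of_pos hx0]
        have : δ ≤ ε/2 := min_le_left _ _
        linarith
      · exact hx0
    have hd := hball hmem
    rw [Set.mem_setOf_eq, Real.dist_eq] at hd
    have hq : |g x / shannonF x| ≤ C := by
      have := abs_sub_abs_le_abs_sub (g x / shannonF x) L
      rw [hC]; linarith
    rw [abs_div, abs_of_pos hη] at hq
    calc |g x| = |g x| / shannonF x * shannonF x := by
          rw [div_mul_cancel₀ _ hη.ne']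
      _ ≤ C * shannonF x := mul_le_mul_of_nonneg_right hq hη.le
  obtain ⟨M, hM0, hMb⟩ := concave_bound hconc hg0 hδ0 hδ1
  have hTm : Measurable T := hT.measurable
  -- key bound
  have hbound : ∀ n : ℕ, |joinEnt μ T g P n| ≤ C * joinEnt μ T shannonF P n + M / δ := by
    intro n
    set cell : (Fin n → Fin k) → Set X :=
      fun f => ⋂ i : Fin n, T^[(i : ℕ)] ⁻¹' P (f i) with hcell
    set c : (Fin n → Fin k) → ℝ := fun f => (μ (cell f)).toReal with hc
    have hc0 : ∀ f, 0 ≤ c f := fun f => ENNReal.toReal_nonneg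
    have hc1 : ∀ f, c f ≤ 1 := by
      intro f
      have h1 : μ (cell f) ≤ 1 := prob_le_one
      have := ENNReal.toReal_mono ENNReal.one_ne_top h1
      simpa using this
    have hmeas : ∀ f, MeasurableSet (cell f) :=
      fun f => MeasurableSet.iInter fun i => (hPmeas (f i)).preimage (hTm.iterate i)
    have hdisj : ∀ f f' : Fin n → Fin k, f ≠ f' → Disjoint (cell f) (cell f') := by
      intro f f' hne
      obtain ⟨i, hi⟩ := Function.ne_iff.mp hne
      refine Set.disjoint_left.mpr fun x hx hx' => ?_
      have h1 : T^[(i : ℕ)] x ∈ P (f i) := Set.mem_iInter.mp hx i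
      have h2 : T^[(i : ℕ)] x ∈ P (f' i) := Set.mem_iInter.mp hx' i
      exact Set.disjoint_left.mp (hPdisj _ _ hi) h1 h2
    have hsum : ∑ f : Fin n → Fin k, c f ≤ 1 := by
      have h1 : ∑ f ∈ Finset.univ, μ (cell f) = μ (⋃ f ∈ Finset.univ, cell f) :=
        (measure_biUnion_finset
          (fun f _ f' _ hne => hdisj f f' hne) (fun f _ => hmeas f)).symm
      have h2 : μ (⋃ f ∈ Finset.univ, cell f) ≤ 1 := prob_le_one
      have h3 : (∑ f ∈ Finset.univ, μ (cell f)).toReal ≤ 1 := by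
        rw [h1]
        have := ENNReal.toReal_mono ENNReal.one_ne_top h2
        simpa using this
      rwa [ENNReal.toReal_sum (fun f _ => measure_ne_top μ _)] at h3
    set S : Finset (Fin n → Fin k) := Finset.univ.filter (fun f => δ ≤ c f) with hS
    have hcard : (S.card : ℝ) * δ ≤ 1 := by
      have h1 : S.card • δ ≤ ∑ f ∈ S, c f :=
        Finset.card_nsmul_le_sum S _ δ (fun f hf => (Finset.mem_filter.mp hf).2)
      rw [nsmul_eq_mul] at h1
      have h2 : ∑ f ∈ S, c f ≤ ∑ f : Fin n → Fin k, c f :=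
        Finset.sum_le_sum_of_subset_of_nonneg (Finset.subset_univ S)
          (fun f _ _ => hc0 f)
      linarith
    have hterm : ∀ f : Fin n → Fin k,
        |g (c f)| ≤ C * shannonF (c f) + (if δ ≤ c f then M else 0) := by
      intro f
      by_cases hbig : δ ≤ c f
      · rw [if_pos hbig]
        have h1 : |g (c f)| ≤ M := hMb _ ⟨hbig, hc1 f⟩
        have h2 : 0 ≤ C * shannonF (c f) :=
          mul_nonneg hC0.le (shannon_nonneg (hc0 f) (hc1 f))
        linarith
      · rw [if_neg hbig]
        push_neg at hbig
        rcases eq_or_lt_of_le (hc0 f) with h | h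
        · rw [← h, hg0, abs_zero, add_zero]
          exact mul_nonneg hC0.le (shannon_nonneg le_rfl zero_le_one)
        · rw [add_zero]
          exact hsmall _ h hbig
    calc |joinEnt μ T g P n| ≤ ∑ f : Fin n → Fin k, |g (c f)| :=
          Finset.abs_sum_le_sum_abs _ _
      _ ≤ ∑ f : Fin n → Fin k, (C * shannonF (c f) + (if δ ≤ c f then M else 0)) :=
          Finset.sum_le_sum (fun f _ => hterm f)
      _ = C * joinEnt μ T shannonF P n + (S.card : ℝ) * M := by
          rw [Finset.sum_add_distrib, ← Finset.mul_sum]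
          congr 1
          rw [← Finset.sum_filter, Finset.sum_const, nsmul_eq_mul]
      _ ≤ C * joinEnt μ T shannonF P n + M / δ := by
          have : (S.card : ℝ) * M ≤ M / δ := by
            rw [div_eq_mul_inv]
            have h1 : (S.card : ℝ) ≤ δ⁻¹ := by
              rw [← one_div]
              rw [le_div_iff₀ hδ0]
              exact hcard
            calc (S.card : ℝ) * M = M * (S.card : ℝ) := by ring
              _ ≤ M * δ⁻¹ := mul_le_mul_of_nonneg_left h1 hM0
          linarith
  -- squeeze
  have hz := hzero k P hPmeas hPdisj hPcover
  have htend : Tendsto (fun n : ℕ => C * (joinEnt μ T shannonF P n / n) + (M / δ) / n)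
      atTop (nhds 0) := by
    have h1 := hz.const_mul C
    have h2 := tendsto_const_div_atTop_nhds_zero_nat (M / δ)
    have := h1.add h2
    simpa using this
  apply squeeze_zero_norm' _ htend
  filter_upwards [eventually_ge_atTop 1] with n hn
  have hn0 : (0:ℝ) < n := by exact_mod_cast hn
  rw [Real.norm_eq_abs, abs_div, abs_of_pos hn0]
  calc |joinEnt μ T g P n| / n
      ≤ (C * joinEnt μ T shannonF P n + M / δ) / n := by
        gcongr
        exact hbound n
    _ = C * (joinEnt μ T shannonF P n / n) + (M / δ) / n := by ring
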